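/- arXiv:1502.05366 — 4 statements merged into one kernel-verified Lean document; each statement's English description precedes it below -/
import Mathlib

section
/- (Eckart–Young, spectral norm) Let A be an m×n real matrix with singular values σ_1 ≥ … ≥ σ_r. For any m×n real matrix B of rank at most k < r, ‖A − B‖₂ ≥ σ_{k+1}. -/
set_option maxHeartbeats 1000000

open Matrix

/-- The spectral (operator ℓ²) norm of a real matrix. -/
noncomputable def specNorm {m n : Type*} [Fintype m] [Fintype n] [DecidableEq n]
    (A : Matrix m n ℝ) : ℝ :=
  @norm _ Matrix.instL2OpNormedAddCommGroup.toNorm A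

open scoped Matrix.Norms.L2Operator

lemma euclid_norm_sq_eq {p : ℕ} (v : Fin p → ℝ) :
    ‖(EuclideanSpace.equiv (Fin p) ℝ).symm v‖ ^ 2 = v ⬝ᵥ v := by
  rw [EuclideanSpace.norm_eq, Real.sq_sqrt (by positivity)]
  simp [dotProduct, sq_abs, sq]

/-- (Eckart–Young, spectral norm.)  Let `A = U Σ Vᵀ` be an SVD of the `m × n` real matrix
`A` with decreasingly ordered nonnegative singular values `σ_1 ≥ … ≥ σ_r`, `r = min m n`.
For any `m × n` real matrix `B` of rank at most `k < r`, `‖A − B‖₂ ≥ σ_{k+1}`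
(0-indexed: `σ k`). -/
theorem eckart_young_spectral {m n r : ℕ} (hr : r = min m n)
    (A : Matrix (Fin m) (Fin n) ℝ)
    (U : Matrix (Fin m) (Fin r) ℝ) (V : Matrix (Fin n) (Fin r) ℝ)
    (σ : Fin r → ℝ)
    (hU : Uᵀ * U = 1) (hV : Vᵀ * V = 1)
    (hord : ∀ i j : Fin r, i ≤ j → σ j ≤ σ i) (hpos : ∀ j, 0 ≤ σ j)
    (hA : A = U * Matrix.diagonal σ * Vᵀ)
    (k : ℕ) (hk : k < r)
    (B : Matrix (Fin m) (Fin n) ℝ) (hB : B.rank ≤ k) :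
    σ ⟨k, hk⟩ ≤ specNorm (A - B) := by
  classical
  show σ ⟨k, hk⟩ ≤ ‖A - B‖
  set E : Matrix (Fin r) (Fin (k+1)) ℝ :=
    Matrix.of (fun i j => if (i : ℕ) = (j : ℕ) then (1:ℝ) else 0) with hE
  set M : Matrix (Fin m) (Fin (k+1)) ℝ := B * V * E with hM
  have hrankM : M.rank ≤ k := by
    calc M.rank ≤ (B * V).rank := Matrix.rank_mul_le_left _ _
    _ ≤ B.rank := Matrix.rank_mul_le_left _ _
    _ ≤ k := hB
  have hker : LinearMap.ker M.mulVecLin ≠ ⊥ := by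
    intro h
    have h1 := LinearMap.finrank_range_add_finrank_ker M.mulVecLin
    rw [h, finrank_bot, add_zero] at h1
    have h2 : Module.finrank ℝ (Fin (k+1) → ℝ) = k + 1 := by
      simp [Module.finrank_pi]
    rw [h2] at h1
    have : M.rank = k + 1 := h1
    omega
  obtain ⟨d, hdmem, hdne⟩ := Submodule.exists_mem_ne_zero_of_ne_bot hker
  have hMd : M *ᵥ d = 0 := hdmem
  set c : Fin r → ℝ := fun i => if h : (i : ℕ) < k + 1 then d ⟨i, h⟩ else 0 with hc
  have hEc : E *ᵥ d = c := by
    funext i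
    by_cases h : (i : ℕ) < k + 1
    · simp only [hc, dif_pos h, Matrix.mulVec, dotProduct, hE, Matrix.of_apply]
      rw [Finset.sum_eq_single (⟨(i : ℕ), h⟩ : Fin (k+1))]
      · simp
      · intro j _ hj
        have : (i : ℕ) ≠ (j : ℕ) := fun hij => hj (Fin.ext hij.symm)
        simp [this]
      · intro habs; exact absurd (Finset.mem_univ _) habs
    · simp only [hc, dif_neg h, Matrix.mulVec, dotProduct, hE, Matrix.of_apply]
      apply Finset.sum_eq_zero
      intro j _
      have : (i : ℕ) ≠ (j : ℕ) := by omega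
      simp [this]
  set x : Fin n → ℝ := V *ᵥ c with hx
  have hBx : B *ᵥ x = 0 := by
    rw [hx, ← hEc, Matrix.mulVec_mulVec, Matrix.mulVec_mulVec, ← hM, hMd]
  obtain ⟨j, hj⟩ : ∃ j, d j ≠ 0 := Function.ne_iff.mp hdne
  have hcne : c ⟨(j : ℕ), lt_of_lt_of_le j.isLt (by omega)⟩ ≠ 0 := by
    simp only [hc, dif_pos j.isLt]
    simpa using hj
  have hcc : 0 < c ⬝ᵥ c :=
    Finset.sum_pos' (fun i _ => mul_self_nonneg _)
      ⟨_, Finset.mem_univ _, mul_self_pos.mpr hcne⟩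
  have hVtx : Vᵀ *ᵥ x = c := by
    rw [hx, Matrix.mulVec_mulVec, hV, Matrix.one_mulVec]
  have hxx : x ⬝ᵥ x = c ⬝ᵥ c := by
    conv_lhs => rw [hx]
    rw [Matrix.dotProduct_mulVec, ← Matrix.mulVec_transpose, hVtx]
  set w : Fin r → ℝ := fun i => σ i * c i with hw
  have hAx : A *ᵥ x = U *ᵥ w := by
    rw [hA, hx, Matrix.mulVec_mulVec,
      Matrix.mul_assoc (U * Matrix.diagonal σ) Vᵀ V, hV, Matrix.mul_one,
      ← Matrix.mulVec_mulVec]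
    have hdc : Matrix.diagonal σ *ᵥ c = w := by
      funext i; rw [Matrix.mulVec_diagonal]
    rw [hdc]
  have hAA : (A *ᵥ x) ⬝ᵥ (A *ᵥ x) = w ⬝ᵥ w := by
    rw [hAx, Matrix.dotProduct_mulVec, ← Matrix.mulVec_transpose,
      Matrix.mulVec_mulVec, hU, Matrix.one_mulVec]
  have hineq : σ ⟨k, hk⟩ ^ 2 * (c ⬝ᵥ c) ≤ w ⬝ᵥ w := by
    rw [dotProduct, dotProduct, Finset.mul_sum]
    apply Finset.sum_le_sum
    intro i _
    by_cases h : (i : ℕ) < k + 1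
    · have hle : σ ⟨k, hk⟩ ≤ σ i := hord i ⟨k, hk⟩ (by
        simp only [Fin.le_def]; omega)
      have h1 : σ ⟨k, hk⟩ ^ 2 ≤ σ i ^ 2 := by nlinarith [hpos i, hpos ⟨k, hk⟩]
      have h2 : (0:ℝ) ≤ c i * c i := mul_self_nonneg _
      calc σ ⟨k, hk⟩ ^ 2 * (c i * c i) ≤ σ i ^ 2 * (c i * c i) :=
            mul_le_mul_of_nonneg_right h1 h2
        _ = w i * w i := by rw [hw]; ring
    · have : c i = 0 := by rw [hc]; simp [h]
      simp [hw, this]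
  -- pass to Euclidean norms
  set y : EuclideanSpace ℝ (Fin n) := (EuclideanSpace.equiv (Fin n) ℝ).symm x with hy
  have hny : ‖y‖ ^ 2 = x ⬝ᵥ x := euclid_norm_sq_eq x
  have hz := Matrix.l2_opNorm_mulVec (A - B) y
  have hABx : (A - B) *ᵥ y = A *ᵥ x := by
    show (A - B) *ᵥ x = A *ᵥ x
    rw [Matrix.sub_mulVec, hBx, sub_zero]
  have hnz : ‖(EuclideanSpace.equiv (Fin m) ℝ).symm ((A - B) *ᵥ y)‖ ^ 2 = w ⬝ᵥ w := by
    rw [euclid_norm_sq_eq, hABx, hAA]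
  have hypos : 0 < ‖y‖ := by
    have h0 : 0 < ‖y‖ ^ 2 := by rw [hny, hxx]; exact hcc
    nlinarith [norm_nonneg y]
  have key : σ ⟨k, hk⟩ * ‖y‖ ≤ ‖A - B‖ * ‖y‖ := by
    have h1 : (σ ⟨k, hk⟩ * ‖y‖) ^ 2 ≤ (‖A - B‖ * ‖y‖) ^ 2 := by
      have hsq : (σ ⟨k, hk⟩ * ‖y‖) ^ 2 = σ ⟨k, hk⟩ ^ 2 * ‖y‖ ^ 2 := by ring
      rw [hsq, hny, hxx]
      calc σ ⟨k, hk⟩ ^ 2 * (c ⬝ᵥ c) ≤ w ⬝ᵥ w := hineq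
        _ = ‖(EuclideanSpace.equiv (Fin m) ℝ).symm ((A - B) *ᵥ y)‖ ^ 2 := hnz.symm
        _ ≤ (‖A - B‖ * ‖y‖) ^ 2 := by
            nlinarith [norm_nonneg ((EuclideanSpace.equiv (Fin m) ℝ).symm ((A - B) *ᵥ y)),
              mul_nonneg (norm_nonneg (A - B)) (norm_nonneg y), hz]
    have ha : 0 ≤ σ ⟨k, hk⟩ * ‖y‖ := mul_nonneg (hpos _) (norm_nonneg _)
    have hb : 0 ≤ ‖A - B‖ * ‖y‖ := mul_nonneg (norm_nonneg _) (norm_nonneg _)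
    nlinarith
  exact le_of_mul_le_mul_right key hypos
end

section
/- (Eckart–Young, Frobenius norm) Let A be an m×n real matrix with singular values σ_1 ≥ … ≥ σ_r. For any m×n real matrix B of rank at most k < r, ‖A − B‖_F² ≥ Σ_{j=k+1}^r σ_j². -/
open Matrix

/-- The Frobenius norm of a real matrix. -/
noncomputable def frobNorm {m n : Type*} [Fintype m] [Fintype n]
    (A : Matrix m n ℝ) : ℝ :=
  @norm _ Matrix.frobeniusNormedAddCommGroup.toNorm A

section helpers

lemma EY.trace_nonneg {α β : Type*} [Fintype α] [Fintype β]
    (M : Matrix α β ℝ) : 0 ≤ (Mᵀ * M).trace := by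
  classical
  simp only [Matrix.trace, Matrix.diag, Matrix.mul_apply, Matrix.transpose_apply]
  exact Finset.sum_nonneg fun j _ => Finset.sum_nonneg fun i _ => mul_self_nonneg _

lemma EY.proj_expand {α β γ : Type*} [Fintype α] [Fintype β] [Fintype γ] [DecidableEq β]
    (C : Matrix α β ℝ) (hC : Cᵀ * C = 1) (X : Matrix α γ ℝ) :
    (X - C*(Cᵀ*X))ᵀ*(X - C*(Cᵀ*X)) = Xᵀ*X - Xᵀ*(C*Cᵀ)*X := by
  simp only [Matrix.transpose_sub, Matrix.sub_mul, Matrix.mul_sub, Matrix.transpose_mul,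
    Matrix.transpose_transpose, Matrix.mul_assoc]
  rw [show Cᵀ * (C * (Cᵀ * X)) = Cᵀ * X by rw [← Matrix.mul_assoc, hC, Matrix.one_mul]]
  abel

lemma EY.proj_diag_le {α β γ : Type*} [Fintype α] [Fintype β] [Fintype γ] [DecidableEq β]
    (C : Matrix α β ℝ) (hC : Cᵀ * C = 1) (X : Matrix α γ ℝ) (j : γ) :
    (Xᵀ*(C*Cᵀ)*X) j j ≤ (Xᵀ*X) j j := by
  have h1 := EY.proj_expand C hC X
  have h2 : 0 ≤ ((X - C*(Cᵀ*X))ᵀ*(X - C*(Cᵀ*X))) j j := by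
    rw [Matrix.mul_apply]
    exact Finset.sum_nonneg fun i _ => mul_self_nonneg _
  rw [h1, Matrix.sub_apply] at h2
  linarith

lemma EY.sum_mul_le_top {r k : ℕ} (hk : k < r) (a s : Fin r → ℝ)
    (ha : ∀ i j : Fin r, i ≤ j → a j ≤ a i) (ha0 : ∀ i, 0 ≤ a i)
    (hs0 : ∀ i, 0 ≤ s i) (hs1 : ∀ i, s i ≤ 1) (hsum : ∑ i, s i ≤ k) :
    ∑ i, a i * s i ≤ ∑ i ∈ Finset.univ.filter (fun i : Fin r => (i:ℕ) < k), a i := by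
  classical
  set κ : Fin r := ⟨k, hk⟩ with hκ
  set T : Finset (Fin r) := Finset.univ.filter fun i : Fin r => (i:ℕ) < k with hT
  have hTcard : T.card = k := by
    have : T = Finset.Iio κ := by ext i; simp [hT, hκ, Fin.lt_def]
    rw [this, Fin.card_Iio]
  have hsplit : ∑ i, a i * s i = ∑ i ∈ T, a i * s i + ∑ i ∈ Tᶜ, a i * s i :=
    (Finset.sum_add_sum_compl T _).symm
  have hsplit2 : ∑ i, s i = ∑ i ∈ T, s i + ∑ i ∈ Tᶜ, s i :=
    (Finset.sum_add_sum_compl T _).symm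
  have h1 : ∑ i ∈ Tᶜ, a i * s i ≤ a κ * ∑ i ∈ Tᶜ, s i := by
    rw [Finset.mul_sum]
    refine Finset.sum_le_sum fun i hi => ?_
    have hiT : ¬ ((i:ℕ) < k) := by simpa [hT] using hi
    have : κ ≤ i := by simp [hκ, Fin.le_def]; omega
    exact mul_le_mul_of_nonneg_right (ha κ i this) (hs0 i)
  have h2 : a κ * ∑ i ∈ Tᶜ, s i ≤ a κ * (k - ∑ i ∈ T, s i) := by
    apply mul_le_mul_of_nonneg_left _ (ha0 κ)
    linarith
  have h3 : a κ * ((k : ℝ) - ∑ i ∈ T, s i) = ∑ i ∈ T, a κ * (1 - s i) := by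
    simp only [mul_sub, Finset.sum_sub_distrib, Finset.sum_const, nsmul_eq_mul, hTcard,
      Finset.mul_sum]
    ring
  have h4 : ∑ i ∈ T, a κ * (1 - s i) ≤ ∑ i ∈ T, a i * (1 - s i) := by
    refine Finset.sum_le_sum fun i hi => ?_
    have hiT : (i:ℕ) < k := by simpa [hT] using hi
    have : i ≤ κ := by simp [hκ, Fin.le_def]; omega
    exact mul_le_mul_of_nonneg_right (ha i κ this) (by linarith [hs1 i])
  have h5 : ∑ i ∈ T, a i * s i + ∑ i ∈ T, a i * (1 - s i) = ∑ i ∈ T, a i := by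
    rw [← Finset.sum_add_distrib]; apply Finset.sum_congr rfl; intros; ring
  linarith

lemma EY.exists_proj {m n : ℕ} (B : Matrix (Fin m) (Fin n) ℝ) :
    ∃ (d : ℕ) (C : Matrix (Fin m) (Fin d) ℝ),
      d = B.rank ∧ Cᵀ * C = 1 ∧ C * Cᵀ * B = B := by
  classical
  let eqv : (Fin m → ℝ) ≃ₗ[ℝ] EuclideanSpace ℝ (Fin m) :=
    (WithLp.linearEquiv 2 ℝ (Fin m → ℝ)).symm
  let W : Submodule ℝ (EuclideanSpace ℝ (Fin m)) :=
    (LinearMap.range B.mulVecLin).map (eqv : (Fin m → ℝ) →ₗ[ℝ] EuclideanSpace ℝ (Fin m))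
  have hdim : Module.finrank ℝ W = B.rank :=
    LinearEquiv.finrank_map_eq eqv (LinearMap.range B.mulVecLin)
  set d := Module.finrank ℝ W with hd
  let ob : OrthonormalBasis (Fin d) ℝ W := stdOrthonormalBasis ℝ W
  let C : Matrix (Fin m) (Fin d) ℝ := fun i b => (ob b : EuclideanSpace ℝ (Fin m)) i
  refine ⟨d, C, hdim.symm ▸ rfl, ?_, ?_⟩
  · ext b b'
    have := ob.orthonormal
    rw [orthonormal_iff_ite] at this
    have h := this b b'
    rw [Submodule.coe_inner] at h
    simp only [PiLp.inner_apply, RCLike.inner_apply, conj_trivial] at h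
    rw [Matrix.mul_apply, Matrix.one_apply, ← h]
    exact Finset.sum_congr rfl fun x _ => mul_comm _ _
  · ext i j
    have hcol : eqv (fun i => B i j) ∈ W := by
      refine Submodule.mem_map_of_mem ?_
      exact ⟨Pi.single j 1, by ext i'; simp [Matrix.mulVec_single]⟩
    set x : W := ⟨eqv (fun i => B i j), hcol⟩ with hx
    have hxa : ∀ a, ((x : EuclideanSpace ℝ (Fin m)) : Fin m → ℝ) a = B a j := fun a => rfl
    have hco : ∀ b, ob.repr x b = ∑ a, (ob b : EuclideanSpace ℝ (Fin m)) a * B a j := by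
      intro b
      rw [ob.repr_apply_apply x, Submodule.coe_inner]
      simp only [PiLp.inner_apply, RCLike.inner_apply, conj_trivial]
      exact Finset.sum_congr rfl fun a _ => by rw [hxa a, mul_comm]
    have h0 : ((∑ b, ob.repr x b • ob b : W) : EuclideanSpace ℝ (Fin m)) i
        = ((x : EuclideanSpace ℝ (Fin m)) : Fin m → ℝ) i := by rw [ob.sum_repr x]
    have h2 : ((∑ b, ob.repr x b • ob b : W) : EuclideanSpace ℝ (Fin m)) i
        = ∑ b, ob.repr x b * (ob b : EuclideanSpace ℝ (Fin m)) i := by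
      rw [AddSubmonoidClass.coe_finset_sum]
      rw [WithLp.ofLp_sum, Finset.sum_apply]
      exact Finset.sum_congr rfl fun b _ => rfl
    have key : ∑ b, (∑ a, (ob b : EuclideanSpace ℝ (Fin m)) a * B a j)
        * (ob b : EuclideanSpace ℝ (Fin m)) i = B i j := by
      rw [← hxa i, ← h0, h2]
      exact Finset.sum_congr rfl fun b _ => by rw [hco b]
    show ∑ a, (C * Cᵀ) i a * B a j = B i j
    calc ∑ a, (C * Cᵀ) i a * B a j
        = ∑ a, (∑ b, C i b * C a b) * B a j := by
          exact Finset.sum_congr rfl fun a _ => by rw [Matrix.mul_apply]; rfl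
      _ = ∑ a, ∑ b, C i b * C a b * B a j := by
          exact Finset.sum_congr rfl fun a _ => Finset.sum_mul _ _ _
      _ = ∑ b, ∑ a, C i b * C a b * B a j := Finset.sum_comm
      _ = ∑ b, (∑ a, (ob b : EuclideanSpace ℝ (Fin m)) a * B a j)
            * (ob b : EuclideanSpace ℝ (Fin m)) i := by
          refine Finset.sum_congr rfl fun b _ => ?_
          rw [Finset.sum_mul]
          exact Finset.sum_congr rfl fun a _ => by simp only [C]; ring
      _ = B i j := key

lemma EY.frobNorm_sq {m n : ℕ} (M : Matrix (Fin m) (Fin n) ℝ) :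
    frobNorm M ^ 2 = (Mᵀ * M).trace := by
  have h : frobNorm M = (∑ i, ∑ j, ‖M i j‖ ^ (2:ℝ)) ^ (1/2 : ℝ) :=
    Matrix.frobenius_norm_def M
  have hrp : ∀ x : ℝ, x ^ (2:ℝ) = x ^ (2:ℕ) := fun x => by
    rw [← Real.rpow_natCast x 2]; norm_num
  simp only [hrp] at h
  have hnn : (0:ℝ) ≤ ∑ i, ∑ j, ‖M i j‖ ^ (2:ℕ) :=
    Finset.sum_nonneg fun i _ => Finset.sum_nonneg fun j _ => by positivity
  have h2 : frobNorm M ^ 2 = ∑ i, ∑ j, ‖M i j‖ ^ (2:ℕ) := by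
    rw [h, ← Real.rpow_natCast (_ ^ (1/2:ℝ)) 2, ← Real.rpow_mul hnn]
    norm_num
  rw [h2]
  simp only [Matrix.trace, Matrix.diag, Matrix.mul_apply, Matrix.transpose_apply,
    Real.norm_eq_abs, sq_abs]
  rw [Finset.sum_comm]
  exact Finset.sum_congr rfl fun i _ => Finset.sum_congr rfl fun j _ => pow_two _

end helpers

/-- (Eckart–Young, Frobenius norm.)  Let `A = U Σ Vᵀ` be an SVD of the `m × n` real matrix
`A` with decreasingly ordered nonnegative singular values `σ_1 ≥ … ≥ σ_r`, `r = min m n`.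
For any `m × n` real matrix `B` of rank at most `k < r`,
`‖A − B‖_F² ≥ Σ_{j=k+1}^r σ_j²` (0-indexed: the sum over `j ≥ k`). -/
theorem eckart_young_frobenius {m n r : ℕ} (hr : r = min m n)
    (A : Matrix (Fin m) (Fin n) ℝ)
    (U : Matrix (Fin m) (Fin r) ℝ) (V : Matrix (Fin n) (Fin r) ℝ)
    (σ : Fin r → ℝ)
    (hU : Uᵀ * U = 1) (hV : Vᵀ * V = 1)
    (hord : ∀ i j : Fin r, i ≤ j → σ j ≤ σ i) (hpos : ∀ j, 0 ≤ σ j)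
    (hA : A = U * Matrix.diagonal σ * Vᵀ)
    (k : ℕ) (hk : k < r)
    (B : Matrix (Fin m) (Fin n) ℝ) (hB : B.rank ≤ k) :
    (∑ j : Fin r, if k ≤ (j : ℕ) then σ j ^ 2 else 0) ≤ frobNorm (A - B) ^ 2 := by
  classical
  obtain ⟨d, C, hd, hC, hCB⟩ := EY.exists_proj B
  have hdk : d ≤ k := hd ▸ hB
  set M : Matrix (Fin m) (Fin n) ℝ := A - B with hM
  set P : Matrix (Fin m) (Fin m) ℝ := C * Cᵀ with hP
  set Q : Matrix (Fin m) (Fin m) ℝ := 1 - P with hQdef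
  set D : Matrix (Fin r) (Fin r) ℝ := Matrix.diagonal σ with hD
  set N : Matrix (Fin r) (Fin r) ℝ := Uᵀ * P * U with hN
  set s : Fin r → ℝ := fun i => N i i with hs
  have hQB : Q * B = 0 := by
    rw [hQdef, Matrix.sub_mul, Matrix.one_mul, hP, hCB, sub_self]
  have hQM : Q * M = Q * A := by rw [hM, Matrix.mul_sub, hQB, sub_zero]
  have hQexp : ∀ X : Matrix (Fin m) (Fin n) ℝ, (Q*X)ᵀ*(Q*X) = Xᵀ*X - Xᵀ*P*X := by
    intro X
    have h1 : Q * X = X - C*(Cᵀ*X) := by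
      rw [hQdef, Matrix.sub_mul, Matrix.one_mul, hP, Matrix.mul_assoc]
    rw [h1, EY.proj_expand C hC X, hP]
  -- step 1
  have step1 : ((Q*A)ᵀ*(Q*A)).trace ≤ (Mᵀ*M).trace := by
    have e1 : ((Q*M)ᵀ*(Q*M)).trace = (Mᵀ*M).trace - (Mᵀ*P*M).trace := by
      rw [hQexp M, Matrix.trace_sub]
    have e2 : 0 ≤ (Mᵀ*P*M).trace := by
      have h : Mᵀ*P*M = (Cᵀ*M)ᵀ*(Cᵀ*M) := by
        rw [Matrix.transpose_mul, Matrix.transpose_transpose, hP]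
        simp only [Matrix.mul_assoc]
      rw [h]; exact EY.trace_nonneg _
    rw [hQM] at e1
    linarith
  -- traces of AᵀA and AᵀPA
  have hDt : Dᵀ = D := by rw [hD, Matrix.diagonal_transpose]
  have hAtA : (Aᵀ*A).trace = ∑ i, σ i * σ i := by
    rw [hA]
    simp only [Matrix.transpose_mul, Matrix.transpose_transpose, Matrix.mul_assoc]
    rw [← Matrix.mul_assoc Uᵀ U, hU, Matrix.one_mul]
    rw [Matrix.trace_mul_comm V (Dᵀ * (D * Vᵀ))]
    simp only [Matrix.mul_assoc]
    rw [hV, Matrix.mul_one, hDt]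
    rw [show D * D = Matrix.diagonal (fun i => σ i * σ i) from by
      rw [hD, Matrix.diagonal_mul_diagonal], Matrix.trace_diagonal]
  have hAPA : (Aᵀ*(P*A)).trace = ∑ i, σ i * s i * σ i := by
    rw [hA]
    simp only [Matrix.transpose_mul, Matrix.transpose_transpose, Matrix.mul_assoc]
    rw [Matrix.trace_mul_comm V (Dᵀ * (Uᵀ * (P * (U * (D * Vᵀ)))))]
    simp only [Matrix.mul_assoc]
    rw [hV, Matrix.mul_one, hDt]
    rw [show Uᵀ * (P * (U * D)) = N * D from by rw [hN]; simp only [Matrix.mul_assoc]]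
    simp only [Matrix.trace, Matrix.diag, hD, Matrix.diagonal_mul, Matrix.mul_diagonal]
    exact Finset.sum_congr rfl fun i _ => by simp only [hs]; ring
  -- step 2 : trace ((Q*A)ᵀ*(Q*A)) = Σ σ² - Σ σ s σ
  have step2 : ((Q*A)ᵀ*(Q*A)).trace = ∑ i, σ i * σ i - ∑ i, σ i * s i * σ i := by
    rw [hQexp A, Matrix.trace_sub, hAtA, ← hAPA, Matrix.mul_assoc]
  -- bounds on s
  have hs0 : ∀ i, 0 ≤ s i := by
    intro i
    have hNe : N = (Cᵀ*U)ᵀ*(Cᵀ*U) := by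
      rw [hN, hP, Matrix.transpose_mul, Matrix.transpose_transpose]
      simp only [Matrix.mul_assoc]
    simp only [hs, hNe, Matrix.mul_apply]
    exact Finset.sum_nonneg fun b _ => mul_self_nonneg _
  have hs1 : ∀ i, s i ≤ 1 := by
    intro i
    have h := EY.proj_diag_le C hC U i
    rw [← hP, ← hN, hU, Matrix.one_apply_eq] at h
    exact h
  have hssum : ∑ i, s i ≤ (d : ℝ) := by
    have htr : ∑ i, s i = (Cᵀ*(U*Uᵀ)*C).trace := by
      have e : N.trace = (Cᵀ*(U*Uᵀ)*C).trace := by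
        rw [hN, hP]
        rw [show Uᵀ * (C * Cᵀ) * U = (Uᵀ * C) * (Cᵀ * U) from by
          simp only [Matrix.mul_assoc]]
        rw [Matrix.trace_mul_comm (Uᵀ * C) (Cᵀ * U)]
        rw [show Cᵀ * U * (Uᵀ * C) = Cᵀ * (U * Uᵀ) * C from by
          simp only [Matrix.mul_assoc]]
      rw [← e]; rfl
    rw [htr]
    have hb : ∀ b : Fin d, (Cᵀ*(U*Uᵀ)*C) b b ≤ 1 := by
      intro b
      have h := EY.proj_diag_le U hU C b
      rwa [hC, Matrix.one_apply_eq] at h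
    calc (Cᵀ*(U*Uᵀ)*C).trace = ∑ b : Fin d, (Cᵀ*(U*Uᵀ)*C) b b := rfl
      _ ≤ ∑ _b : Fin d, (1:ℝ) := Finset.sum_le_sum fun b _ => hb b
      _ = (d:ℝ) := by simp
  have hssumk : ∑ i, s i ≤ (k : ℝ) :=
    le_trans hssum (by exact_mod_cast hdk)
  -- combinatorial bound
  have comb : ∑ i, σ i ^ 2 * s i
      ≤ ∑ i ∈ Finset.univ.filter (fun i : Fin r => (i:ℕ) < k), σ i ^ 2 := by
    refine EY.sum_mul_le_top hk (fun i => σ i ^ 2) s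
      (fun i j hij => pow_le_pow_left₀ (hpos j) (hord i j hij) 2)
      (fun i => by positivity) hs0 hs1 hssumk
  -- splitting the sum of σ²
  have hsplitσ : ∑ j : Fin r, (if k ≤ (j:ℕ) then σ j ^ 2 else 0)
      + ∑ j ∈ Finset.univ.filter (fun i : Fin r => (i:ℕ) < k), σ j ^ 2
      = ∑ j : Fin r, σ j ^ 2 := by
    rw [Finset.sum_filter, ← Finset.sum_add_distrib]
    refine Finset.sum_congr rfl fun j _ => ?_
    by_cases h : (j:ℕ) < k
    · simp [h, Nat.not_le.mpr h]
    · simp [h, Nat.le_of_not_lt h]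
  -- put everything together
  have hfrob : frobNorm (A - B) ^ 2 = (Mᵀ*M).trace := by
    rw [← hM]; exact EY.frobNorm_sq M
  have hσs : ∑ i, σ i * s i * σ i = ∑ i, σ i ^ 2 * s i :=
    Finset.sum_congr rfl fun i _ => by ring
  have hσσ : ∑ i, σ i * σ i = ∑ i, σ i ^ 2 :=
    Finset.sum_congr rfl fun i _ => (pow_two _).symm
  rw [hfrob]
  have := step1
  rw [step2, hσs, hσσ] at this
  linarith
end

section
/- Let A be an m×n real matrix, Q an m×ℓ matrix with orthonormal columns, and B = Qᵀ A. Let Bᵀ = Q̂ R̂ be a compact QR factorization and R̂ = Û Σ̂ V̂ᵀ an SVD of the ℓ×ℓ matrix R̂. Then Q Qᵀ A = (Q V̂) Σ̂ (Q̂ Û)ᵀ, and both Q V̂ and Q̂ Û have orthonormal columns; i.e., this yields an SVD of Q Qᵀ A. -/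
open Matrix

/-- Let `A` be `m × n`, `Q` an `m × ℓ` matrix with orthonormal columns, `B = Qᵀ A`.
If `Bᵀ = Q̂ R̂` is a compact QR factorization and `R̂ = Û Σ̂ V̂ᵀ` is an SVD of the
`ℓ × ℓ` matrix `R̂`, then `Q Qᵀ A = (Q V̂) Σ̂ (Q̂ Û)ᵀ`, where `Q V̂` and `Q̂ Û` have
orthonormal columns; i.e., this yields an SVD of `Q Qᵀ A`. -/
theorem svd_via_qr_of_Bt {m n ℓ : ℕ}
    (A : Matrix (Fin m) (Fin n) ℝ)
    (Q : Matrix (Fin m) (Fin ℓ) ℝ) (hQ : Qᵀ * Q = 1)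
    (B : Matrix (Fin ℓ) (Fin n) ℝ) (hB : B = Qᵀ * A)
    (Qh : Matrix (Fin n) (Fin ℓ) ℝ) (Rh : Matrix (Fin ℓ) (Fin ℓ) ℝ)
    (hQh : Qhᵀ * Qh = 1) (hQR : Bᵀ = Qh * Rh)
    (hRtri : Rh.BlockTriangular id)
    (Uh Vh : Matrix (Fin ℓ) (Fin ℓ) ℝ) (σ : Fin ℓ → ℝ)
    (hUh : Uhᵀ * Uh = 1) (hUh' : Uh * Uhᵀ = 1)
    (hVh : Vhᵀ * Vh = 1) (hVh' : Vh * Vhᵀ = 1)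
    (hσ : ∀ j, 0 ≤ σ j)
    (hSVD : Rh = Uh * Matrix.diagonal σ * Vhᵀ) :
    Q * Qᵀ * A = (Q * Vh) * Matrix.diagonal σ * (Qh * Uh)ᵀ ∧
      (Q * Vh)ᵀ * (Q * Vh) = 1 ∧ (Qh * Uh)ᵀ * (Qh * Uh) = 1 := by
  have hBt : B = Rhᵀ * Qhᵀ := by
    have := congrArg Matrix.transpose hQR
    simpa [Matrix.transpose_mul] using this
  refine ⟨?_, ?_, ?_⟩
  · calc Q * Qᵀ * A = Q * B := by rw [hB, Matrix.mul_assoc]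
      _ = Q * (Rhᵀ * Qhᵀ) := by rw [hBt]
      _ = Q * ((Uh * Matrix.diagonal σ * Vhᵀ)ᵀ * Qhᵀ) := by rw [hSVD]
      _ = (Q * Vh) * Matrix.diagonal σ * (Qh * Uh)ᵀ := by
        simp [Matrix.transpose_mul, Matrix.diagonal_transpose, Matrix.mul_assoc]
  · rw [Matrix.transpose_mul, Matrix.mul_assoc, ← Matrix.mul_assoc Qᵀ, hQ,
      Matrix.one_mul, hVh]
  · rw [Matrix.transpose_mul, Matrix.mul_assoc, ← Matrix.mul_assoc Qhᵀ, hQh,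
      Matrix.one_mul, hUh]
end

section
/- Let A be an m×n real matrix of exact rank k, and let Ω be an n×k matrix such that VᵀΩ is invertible, where V is the n×k matrix of right singular vectors of A associated with its k nonzero singular values. Let Q be an orthonormal basis for the range of Y = A Ω. Then Q Qᵀ A = A. -/
open Matrix

/-- If `A` is an `m × n` matrix of exact rank `k` with SVD `A = U Σ Vᵀ` (with `Σ` a
`k × k` invertible diagonal matrix), and `Ω` is an `n × k` matrix such that `Vᵀ Ω` is
invertible, then for any orthonormal `Q` whose range equals the range of `Y = A Ω`,
we have `Q Qᵀ A = A`. -/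
theorem sampling_captures_range_of_exact_rank {m n k : ℕ}
    (A : Matrix (Fin m) (Fin n) ℝ)
    (U : Matrix (Fin m) (Fin k) ℝ) (V : Matrix (Fin n) (Fin k) ℝ)
    (σ : Fin k → ℝ)
    (hU : Uᵀ * U = 1) (hV : Vᵀ * V = 1) (hσ : ∀ j, σ j ≠ 0)
    (hA : A = U * Matrix.diagonal σ * Vᵀ)
    (hrank : A.rank = k)
    (Ω : Matrix (Fin n) (Fin k) ℝ) (hΩ : IsUnit (Vᵀ * Ω))
    (Q : Matrix (Fin m) (Fin k) ℝ) (hQ : Qᵀ * Q = 1)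
    (hrange : Set.range Q.mulVec = Set.range (A * Ω).mulVec) :
    Q * Qᵀ * A = A := by
  -- M = Σ (Vᵀ Ω) is invertible
  set M : Matrix (Fin k) (Fin k) ℝ := Matrix.diagonal σ * (Vᵀ * Ω) with hM
  have hMunit : IsUnit M := by
    refine IsUnit.mul ?_ hΩ
    rw [Matrix.isUnit_iff_isUnit_det, Matrix.det_diagonal]
    exact isUnit_iff_ne_zero.mpr (Finset.prod_ne_zero_iff.mpr fun j _ => hσ j)
  have hY : A * Ω = U * M := by
    rw [hA, hM]
    simp [Matrix.mul_assoc]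
  -- surjectivity of M.mulVec
  have hMsurj : Function.Surjective M.mulVec := by
    obtain ⟨M', hM'⟩ := hMunit.exists_right_inv
    intro y
    exact ⟨M'.mulVec y, by rw [Matrix.mulVec_mulVec, hM', Matrix.one_mulVec]⟩
  have hrangeU : Set.range Q.mulVec = Set.range U.mulVec := by
    rw [hrange, hY]
    ext y
    constructor
    · rintro ⟨x, rfl⟩
      exact ⟨M.mulVec x, by rw [Matrix.mulVec_mulVec]⟩
    · rintro ⟨x, rfl⟩
      obtain ⟨z, hz⟩ := hMsurj x
      exact ⟨z, by rw [← Matrix.mulVec_mulVec, hz]⟩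
  have key : ∀ x, (Q * Qᵀ).mulVec (U.mulVec x) = U.mulVec x := by
    intro x
    obtain ⟨c, hc⟩ : U.mulVec x ∈ Set.range Q.mulVec := hrangeU ▸ Set.mem_range_self x
    rw [← hc, Matrix.mulVec_mulVec, Matrix.mul_assoc, hQ, Matrix.mul_one]
  have hQU : Q * Qᵀ * U = U := by
    ext i j
    have h2 : (Q * Qᵀ * U) *ᵥ Pi.single j 1 = U *ᵥ Pi.single j 1 := by
      rw [← Matrix.mulVec_mulVec]; exact key _
    simpa [Matrix.mulVec_single] using congrFun h2 i
  rw [hA, ← Matrix.mul_assoc, ← Matrix.mul_assoc, hQU]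
end
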